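/- Let h ∈ SL_n be a diagonal matrix, u ∈ S_n, and Z := h · (w_0 u)^• the corresponding monomial matrix, where w_0 is the longest permutation. For j ∈ {1,…,n−1} define the red minors R_j := Δ_{w_0 u[j], [j]}(Z) and blue minors B_j := Δ_{w_0[j], u^{−1}[j]}(Z), and set R_0 = B_0 = R_n = B_n = 1. Then for every a ∈ {1,…,n}, R_a · B_{u(a)−1} = B_{u(a)} · R_{a−1}. -/

import Mathlib

open Matrix Pointwise
open scoped Classical

noncomputable section

/-- `phi n i A` places the 2×2 matrix `A` into rows and columns `i, i+1`
(0-based) of the identity matrix. -/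
def phi (n i : ℕ) (A : Matrix (Fin 2) (Fin 2) ℂ) : Matrix (Fin n) (Fin n) ℂ :=
  Matrix.of fun a b =>
    if (a : ℕ) = i ∧ (b : ℕ) = i then A 0 0
    else if (a : ℕ) = i ∧ (b : ℕ) = i + 1 then A 0 1
    else if (a : ℕ) = i + 1 ∧ (b : ℕ) = i then A 1 0
    else if (a : ℕ) = i + 1 ∧ (b : ℕ) = i + 1 then A 1 1
    else if a = b then 1 else 0

def sdot (n i : ℕ) : Matrix (Fin n) (Fin n) ℂ := phi n i !![0, -1; 1, 0]
def xmat (n i : ℕ) (t : ℂ) : Matrix (Fin n) (Fin n) ℂ := phi n i !![1, t; 0, 1]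
def ymat (n i : ℕ) (t : ℂ) : Matrix (Fin n) (Fin n) ℂ := phi n i !![1, 0; t, 1]
def zmat (n i : ℕ) (t : ℂ) : Matrix (Fin n) (Fin n) ℂ := phi n i !![t, -1; 1, 0]
def zbar (n i : ℕ) (t : ℂ) : Matrix (Fin n) (Fin n) ℂ := phi n i !![t, 1; -1, 0]
def alphamat (n i : ℕ) (t : ℂ) : Matrix (Fin n) (Fin n) ℂ := phi n i !![t, 0; 0, 1/t]

/-- The simple transposition swapping `i` and `i+1` (0-based). -/
def sperm (n i : ℕ) : Equiv.Perm (Fin n) :=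
  if h : i + 1 < n then Equiv.swap ⟨i, Nat.lt_of_succ_lt h⟩ ⟨i + 1, h⟩ else 1

def wordPerm (n : ℕ) (l : List ℕ) : Equiv.Perm (Fin n) := (l.map (sperm n)).prod

def wordMat (n : ℕ) (l : List ℕ) : Matrix (Fin n) (Fin n) ℂ := (l.map (sdot n)).prod

def IsWordFor (n : ℕ) (l : List ℕ) (w : Equiv.Perm (Fin n)) : Prop :=
  (∀ i ∈ l, i + 1 < n) ∧ wordPerm n l = w

/-- Coxeter length on `S_n`. -/
def plen (n : ℕ) (w : Equiv.Perm (Fin n)) : ℕ :=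
  sInf {k | ∃ l : List ℕ, IsWordFor n l w ∧ l.length = k}

def IsReducedWord (n : ℕ) (l : List ℕ) (w : Equiv.Perm (Fin n)) : Prop :=
  IsWordFor n l w ∧ l.length = plen n w

/-- The minor of `M` with row set `A` and column set `B` (of equal sizes). -/
def minorD {n : ℕ} (M : Matrix (Fin n) (Fin n) ℂ) (A B : Finset (Fin n)) : ℂ :=
  if h : A.card = B.card then
    (M.submatrix (fun k => A.orderEmbOfFin rfl k) (fun k => B.orderEmbOfFin h.symm k)).det
  else 0

/-- `pset n w k = {w(1),…,w(k)}` (1-indexed), i.e. the image under `w`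
of the first `k` elements of `Fin n`. -/
def pset (n : ℕ) (w : Equiv.Perm (Fin n)) (k : ℕ) : Finset (Fin n) :=
  (Finset.univ.filter fun j : Fin n => (j : ℕ) < k).image w

/-- Upper unitriangular matrices. -/
def Uplus (n : ℕ) : Set (Matrix (Fin n) (Fin n) ℂ) :=
  {g | (∀ i, g i i = 1) ∧ ∀ i j : Fin n, j < i → g i j = 0}

/-- The double coset `U₊ M U₊`. -/
def DCoset (n : ℕ) (M : Matrix (Fin n) (Fin n) ℂ) : Set (Matrix (Fin n) (Fin n) ℂ) :=
  {x | ∃ a ∈ Uplus n, ∃ c ∈ Uplus n, x = a * M * c}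

/-- The Borel subgroup of upper triangular matrices in SL_n. -/
def Bplus (n : ℕ) : Set (Matrix (Fin n) (Fin n) ℂ) :=
  {g | g.det = 1 ∧ ∀ i j : Fin n, j < i → g i j = 0}

/-- The Bruhat cell `B₊ M B₊`. -/
def BruhatCell (n : ℕ) (M : Matrix (Fin n) (Fin n) ℂ) : Set (Matrix (Fin n) (Fin n) ℂ) :=
  {x | ∃ a ∈ Bplus n, ∃ c ∈ Bplus n, x = a * M * c}

/-- Red grid minor `R_j` of the monomial matrix `Z = h · (w₀u)^•` (with
`R_n := 1`; `R_0 = 1` automatically since the empty minor is 1). Here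
`wordMat n l` is the lift `(w₀u)^•` along a reduced word `l` for `w₀u`. -/
def Rminor (n : ℕ) (h : Fin n → ℂ) (u : Equiv.Perm (Fin n)) (l : List ℕ) (j : ℕ) : ℂ :=
  if j = n then 1
  else minorD (Matrix.diagonal h * wordMat n l)
    (pset n ((Fin.revPerm : Equiv.Perm (Fin n)) * u) j) (pset n 1 j)

/-- Blue grid minor `B_j` of `Z = h · (w₀u)^•` (with `B_n := 1`). -/
def Bminor (n : ℕ) (h : Fin n → ℂ) (u : Equiv.Perm (Fin n)) (l : List ℕ) (j : ℕ) : ℂ :=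
  if j = n then 1
  else minorD (Matrix.diagonal h * wordMat n l)
    (pset n (Fin.revPerm : Equiv.Perm (Fin n)) j) (pset n u⁻¹ j)

/-! ### Auxiliary machinery -/

/-- signed generalized permutation matrix -/
def sgnmat (n : ℕ) (w : Equiv.Perm (Fin n)) (g : Fin n → ℂ) : Matrix (Fin n) (Fin n) ℂ :=
  Matrix.of fun i j => if i = w j then g j else 0

lemma sgnmat_mul (n : ℕ) (σ τ : Equiv.Perm (Fin n)) (s t : Fin n → ℂ) :
    sgnmat n σ s * sgnmat n τ t = sgnmat n (σ * τ) (fun j => s (τ j) * t j) := by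
  ext i j
  simp only [Matrix.mul_apply, sgnmat, Matrix.of_apply]
  rw [Finset.sum_eq_single (τ j)]
  · simp [Equiv.Perm.mul_apply]
    exact if_congr Iff.rfl rfl rfl
  · intro k _ hk
    simp [hk]
  · simp

lemma sgnmat_one (n : ℕ) : sgnmat n 1 (fun _ => 1) = 1 := by
  ext i j
  simp [sgnmat, Matrix.one_apply]
  exact if_congr Iff.rfl rfl rfl

lemma sdot_eq (n i : ℕ) (hi : i + 1 < n) :
    sdot n i = sgnmat n (sperm n i) (fun j => if (j : ℕ) = i + 1 then -1 else 1) := by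
  have hi' : i < n := Nat.lt_of_succ_lt hi
  ext a b
  simp only [sdot, phi, sgnmat, Matrix.of_apply, sperm, dif_pos hi]
  rcases eq_or_ne (b : ℕ) i with hb | hb
  · have hb' : b = (⟨i, hi'⟩ : Fin n) := by ext; simpa using hb
    subst hb'
    rw [Equiv.swap_apply_left]
    rcases eq_or_ne (a : ℕ) (i+1) with ha | ha
    · have : a = (⟨i+1, hi⟩ : Fin n) := by ext; simpa using ha
      subst this
      simp [Fin.ext_iff, Matrix.cons_val_zero, Matrix.cons_val_one]
    · have h1 : ¬ ((a:ℕ) = i ∧ (i:ℕ) = i + 1) := by omega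
      have h2 : a ≠ (⟨i+1, hi⟩ : Fin n) := by simp [Fin.ext_iff]; omega
      rcases eq_or_ne (a : ℕ) i with ha2 | ha2
      · simp [ha2, ha, h2, Fin.ext_iff]
      · have : a ≠ (⟨i, hi'⟩ : Fin n) := by simp [Fin.ext_iff]; omega
        simp [ha2, ha, h2, this, Fin.ext_iff]
  · rcases eq_or_ne (b : ℕ) (i+1) with hb2 | hb2
    · have hb' : b = (⟨i+1, hi⟩ : Fin n) := by ext; simpa using hb2
      subst hb'
      rw [Equiv.swap_apply_right]
      rcases eq_or_ne (a : ℕ) i with ha | ha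
      · have : a = (⟨i, hi'⟩ : Fin n) := by ext; simpa using ha
        subst this
        simp
      · have h2 : a ≠ (⟨i, hi'⟩ : Fin n) := by simp [Fin.ext_iff]; omega
        rcases eq_or_ne (a:ℕ) (i+1) with ha2 | ha2
        · simp [ha, ha2, h2]
        · simp [ha, ha2, h2, Fin.ext_iff]
    · have hbs : Equiv.swap (⟨i, hi'⟩ : Fin n) ⟨i+1, hi⟩ b = b := by
        rw [Equiv.swap_apply_of_ne_of_ne] <;> simp [Fin.ext_iff] <;> omega
      rw [hbs]
      have h1 : ¬ ((a:ℕ) = i ∧ (b:ℕ) = i) := by omega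
      have h2 : ¬ ((a:ℕ) = i ∧ (b:ℕ) = i+1) := by omega
      have h3 : ¬ ((a:ℕ) = i+1 ∧ (b:ℕ) = i) := by omega
      have h4 : ¬ ((a:ℕ) = i+1 ∧ (b:ℕ) = i+1) := by omega
      simp only [h1, h2, h3, h4, if_false]
      by_cases hab : a = b
      · simp [hab, hb2]
      · simp [hab]

lemma wordMat_cons (n i : ℕ) (l : List ℕ) :
    wordMat n (i :: l) = sdot n i * wordMat n l := by
  simp [wordMat]

lemma wordPerm_cons (n i : ℕ) (l : List ℕ) :
    wordPerm n (i :: l) = sperm n i * wordPerm n l := by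
  simp [wordPerm]

lemma wordMat_eq (n : ℕ) (l : List ℕ) (hl : ∀ i ∈ l, i + 1 < n) :
    ∃ s : Fin n → ℂ, (∀ j, s j = 1 ∨ s j = -1) ∧
      wordMat n l = sgnmat n (wordPerm n l) s := by
  induction l with
  | nil =>
    exact ⟨fun _ => 1, fun _ => Or.inl rfl, by
      simp [wordMat, wordPerm, sgnmat_one]⟩
  | cons i l ih =>
    obtain ⟨s, hs, hmat⟩ := ih (fun j hj => hl j (List.mem_cons_of_mem _ hj))
    have hi : i + 1 < n := hl i List.mem_cons_self
    refine ⟨fun j => (if ((wordPerm n l j : ℕ)) = i + 1 then (-1:ℂ) else 1) * s j,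
      fun j => ?_, ?_⟩
    · rcases hs j with h | h <;> by_cases hc : ((wordPerm n l j : ℕ)) = i + 1 <;>
        simp [h, hc]
    · rw [wordMat_cons, hmat, sdot_eq n i hi, sgnmat_mul, wordPerm_cons]

lemma sign_eq_signAux {m : ℕ} (σ : Equiv.Perm (Fin m)) :
    Equiv.Perm.sign σ = Equiv.Perm.signAux σ := by
  refine Equiv.Perm.swap_induction_on σ (by simp [Equiv.Perm.signAux_one]) ?_
  intro f x y hxy ih
  rw [Equiv.Perm.sign_mul, Equiv.Perm.sign_swap hxy, Equiv.Perm.signAux_mul,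
    Equiv.Perm.signAux_swap hxy, ih]

/-- number of inversions of a permutation of `Fin m` -/
def pinv {m : ℕ} (σ : Equiv.Perm (Fin m)) : ℕ :=
  ((Finset.univ ×ˢ Finset.univ : Finset (Fin m × Fin m)).filter
    fun p => p.1 < p.2 ∧ σ p.2 < σ p.1).card

lemma sign_eq_pinv {m : ℕ} (σ : Equiv.Perm (Fin m)) :
    (Equiv.Perm.sign σ : ℤ) = (-1) ^ pinv σ := by
  rw [sign_eq_signAux]
  unfold Equiv.Perm.signAux
  rw [Finset.prod_ite (f := fun _ => (-1 : ℤˣ)) (g := fun _ => (1 : ℤˣ))]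
  simp only [Finset.prod_const, Finset.prod_const_one, mul_one]
  have hcard : (Finset.filter (fun x => σ x.1 ≤ σ x.2) (Equiv.Perm.finPairsLT m)).card
      = pinv σ := by
    apply Finset.card_bij (fun x _ => ((x.2, x.1) : Fin m × Fin m))
    · rintro ⟨x1, x2⟩ hx
      simp only [Finset.mem_filter, Equiv.Perm.mem_finPairsLT] at hx
      simp only [pinv, Finset.mem_filter, Finset.mem_product]
      refine ⟨⟨Finset.mem_univ _, Finset.mem_univ _⟩, hx.1, ?_⟩
      rcases hx with ⟨hlt, hle⟩
      rcases lt_or_eq_of_le hle with h | h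
      · exact h
      · exact absurd (σ.injective h) (ne_of_gt hlt)
    · rintro ⟨x1, x2⟩ hx ⟨y1, y2⟩ hy hxy
      simp only [Prod.mk.injEq] at hxy
      obtain ⟨h1, h2⟩ := hxy
      cases h1; cases h2; rfl
    · rintro ⟨p1, p2⟩ hp
      simp only [pinv, Finset.mem_filter, Finset.mem_product] at hp
      exact ⟨⟨p2, p1⟩, by
        simp only [Finset.mem_filter, Equiv.Perm.mem_finPairsLT]
        exact ⟨hp.2.1, le_of_lt hp.2.2⟩, rfl⟩
  rw [hcard]
  push_cast
  simp

lemma det_monomial {m : ℕ} (M : Matrix (Fin m) (Fin m) ℂ) (π : Equiv.Perm (Fin m))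
    (hM : ∀ r c, r ≠ π c → M r c = 0) :
    M.det = ((Equiv.Perm.sign π : ℤ) : ℂ) * ∏ c, M (π c) c := by
  have hrep : M = (Matrix.diagonal fun c => M (π c) c).submatrix π.symm id := by
    ext r c
    by_cases hrc : r = π c
    · subst hrc
      simp
    · rw [hM r c hrc, Matrix.submatrix_apply, id]
      rw [Matrix.diagonal_apply_ne]
      intro hsym
      exact hrc ((Equiv.symm_apply_eq π).mp hsym)
  nth_rewrite 1 [hrep]
  rw [Matrix.det_permute, Matrix.det_diagonal]
  rw [show (Equiv.symm π) = π⁻¹ from rfl, Equiv.Perm.sign_inv]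
  try push_cast
  try ring

section patt

variable {n : ℕ} (w : Equiv.Perm (Fin n)) (B : Finset (Fin n))

lemma card_image_w : (B.image w).card = B.card :=
  Finset.card_image_of_injective B w.injective

def midEquiv : {x // x ∈ B} ≃ {y // y ∈ B.image w} where
  toFun b := ⟨w b, Finset.mem_image_of_mem w b.2⟩
  invFun y := ⟨w⁻¹ y, by
    obtain ⟨b, hb, hbe⟩ := Finset.mem_image.mp y.2
    rw [← hbe, ← Equiv.Perm.mul_apply, inv_mul_cancel, Equiv.Perm.one_apply]
    exact hb⟩
  left_inv b := by simp
  right_inv y := by simp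

def patt : Equiv.Perm (Fin (B.image w).card) :=
  ((B.orderIsoOfFin (card_image_w w B).symm).toEquiv.trans (midEquiv w B)).trans
    ((B.image w).orderIsoOfFin rfl).toEquiv.symm

lemma patt_spec (c : Fin (B.image w).card) :
    (B.image w).orderEmbOfFin rfl (patt w B c)
      = w (B.orderEmbOfFin (card_image_w w B).symm c) := by
  rw [← Finset.coe_orderIsoOfFin_apply, ← Finset.coe_orderIsoOfFin_apply]
  simp [patt, midEquiv, Equiv.trans_apply]

def invw (n : ℕ) (w : Equiv.Perm (Fin n)) (B : Finset (Fin n)) : ℕ :=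
  ((B ×ˢ B).filter fun p => p.1 < p.2 ∧ w p.2 < w p.1).card

lemma sign_patt : (Equiv.Perm.sign (patt w B) : ℤ) = (-1) ^ invw n w B := by
  rw [sign_eq_pinv]
  congr 1
  unfold pinv invw
  apply Finset.card_bij (fun p _ =>
    ((B.orderEmbOfFin (card_image_w w B).symm p.1,
      B.orderEmbOfFin (card_image_w w B).symm p.2) : Fin n × Fin n))
  · rintro ⟨p1, p2⟩ hp
    simp only [Finset.mem_filter, Finset.mem_product, Finset.mem_univ, true_and] at hp ⊢
    refine ⟨⟨Finset.orderEmbOfFin_mem _ _ _, Finset.orderEmbOfFin_mem _ _ _⟩, ?_, ?_⟩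
    · exact (OrderEmbedding.lt_iff_lt _).mpr hp.1
    · rw [← patt_spec, ← patt_spec]
      exact (OrderEmbedding.lt_iff_lt _).mpr hp.2
  · rintro ⟨p1, p2⟩ _ ⟨q1, q2⟩ _ hpq
    simp only [Prod.mk.injEq] at hpq
    have h1 := (B.orderEmbOfFin (card_image_w w B).symm).injective hpq.1
    have h2 := (B.orderEmbOfFin (card_image_w w B).symm).injective hpq.2
    simp [Prod.ext_iff, h1, h2]
  · rintro ⟨b1, b2⟩ hb
    simp only [Finset.mem_filter, Finset.mem_product] at hb
    obtain ⟨⟨hb1, hb2⟩, hlt, hwlt⟩ := hb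
    set e := B.orderIsoOfFin (card_image_w w B).symm
    have he : ∀ x (hx : x ∈ B), B.orderEmbOfFin (card_image_w w B).symm (e.symm ⟨x, hx⟩) = x := by
      intro x hx
      rw [← Finset.coe_orderIsoOfFin_apply]
      simp [e]
    refine ⟨(e.symm ⟨b1, hb1⟩, e.symm ⟨b2, hb2⟩), ?_, ?_⟩
    · simp only [Finset.mem_filter, Finset.mem_product, Finset.mem_univ, true_and]
      constructor
      · rw [← OrderEmbedding.lt_iff_lt (B.orderEmbOfFin (card_image_w w B).symm), he, he]
        exact hlt
      · rw [← OrderEmbedding.lt_iff_lt ((B.image w).orderEmbOfFin rfl), patt_spec, patt_spec,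
          he, he]
        exact hwlt
    · simp [he]

lemma minorD_sgnmat (g : Fin n → ℂ) :
    minorD (sgnmat n w g) (B.image w) B = ((-1 : ℂ)) ^ invw n w B * ∏ b ∈ B, g b := by
  unfold minorD
  rw [dif_pos (card_image_w w B)]
  rw [det_monomial _ (patt w B) ?_]
  · have hdiag : ∀ c, ((sgnmat n w g).submatrix (fun k => (B.image w).orderEmbOfFin rfl k)
        (fun k => B.orderEmbOfFin (card_image_w w B).symm k)) (patt w B c) c
        = g (B.orderEmbOfFin (card_image_w w B).symm c) := by
      intro c
      simp only [Matrix.submatrix_apply, sgnmat, Matrix.of_apply]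
      rw [if_pos (patt_spec w B c)]
    have hprod : ∏ c, g (B.orderEmbOfFin (card_image_w w B).symm c) = ∏ b ∈ B, g b := by
      rw [← Finset.prod_coe_sort B g]
      rw [← Equiv.prod_comp (B.orderIsoOfFin (card_image_w w B).symm).toEquiv
        (fun b => g (b : Fin n))]
      apply Finset.prod_congr rfl
      intro c _
      simp [Finset.coe_orderIsoOfFin_apply]
    rw [Finset.prod_congr rfl (fun c _ => hdiag c), hprod]
    congr 1
    rw [sign_patt]
    push_cast
    ring
  · intro r c hrc
    simp only [Matrix.submatrix_apply, sgnmat, Matrix.of_apply]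
    rw [if_neg]
    rw [← patt_spec]
    intro he
    exact hrc (((B.image w).orderEmbOfFin rfl).injective he)

end patt

lemma det_sgnmat (n : ℕ) (w : Equiv.Perm (Fin n)) (g : Fin n → ℂ) :
    (sgnmat n w g).det = ((Equiv.Perm.sign w : ℤ) : ℂ) * ∏ j, g j := by
  rw [det_monomial (sgnmat n w g) w ?_]
  · congr 1
    apply Finset.prod_congr rfl
    intro c _
    simp [sgnmat]
  · intro r c hrc
    simp [sgnmat, hrc]

lemma det_sdot (n i : ℕ) (hi : i + 1 < n) : (sdot n i).det = 1 := by
  rw [sdot_eq n i hi, det_sgnmat]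
  have hne : (⟨i, Nat.lt_of_succ_lt hi⟩ : Fin n) ≠ ⟨i+1, hi⟩ := by
    simp [Fin.ext_iff]
  have hsgn : sperm n i = Equiv.swap ⟨i, Nat.lt_of_succ_lt hi⟩ ⟨i+1, hi⟩ := by
    simp [sperm, dif_pos hi]
  rw [hsgn, Equiv.Perm.sign_swap hne]
  have hfn : (fun j : Fin n => if (j : ℕ) = i + 1 then (-1:ℂ) else 1)
      = fun j => if j = (⟨i+1, hi⟩ : Fin n) then (-1:ℂ) else 1 := by
    funext j
    simp [Fin.ext_iff]
  rw [hfn]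
  rw [Finset.prod_ite_eq' Finset.univ (⟨i+1, hi⟩ : Fin n) (fun _ => (-1:ℂ))]
  simp

lemma det_wordMat (n : ℕ) (l : List ℕ) (hl : ∀ i ∈ l, i + 1 < n) :
    (wordMat n l).det = 1 := by
  induction l with
  | nil => simp [wordMat]
  | cons i l ih =>
    rw [wordMat_cons, Matrix.det_mul, det_sdot n i (hl i List.mem_cons_self),
      ih (fun j hj => hl j (List.mem_cons_of_mem _ hj))]
    ring

lemma invw_univ_eq_pinv (n : ℕ) (w : Equiv.Perm (Fin n)) :
    invw n w Finset.univ = pinv w := rfl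

lemma invw_insert (n : ℕ) (w : Equiv.Perm (Fin n)) (B : Finset (Fin n)) (x : Fin n)
    (hx : x ∉ B) :
    invw n w (insert x B) = invw n w B
      + (B.filter fun b => x < b ∧ w b < w x).card
      + (B.filter fun b => b < x ∧ w x < w b).card := by
  have hsum : ∀ S : Finset (Fin n), invw n w S
      = ∑ b ∈ S, ∑ c ∈ S, if b < c ∧ w c < w b then 1 else 0 := by
    intro S
    unfold invw
    rw [Finset.card_eq_sum_ones, Finset.sum_filter, Finset.sum_product]
  rw [hsum, Finset.sum_insert hx]
  have h1 : ∑ c ∈ insert x B, (if x < c ∧ w c < w x then 1 else 0)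
      = (B.filter fun b => x < b ∧ w b < w x).card := by
    rw [Finset.sum_insert hx]
    simp only [lt_irrefl, false_and, if_false, zero_add]
    rw [Finset.card_eq_sum_ones, Finset.sum_filter]
  have h2 : ∀ b ∈ B, ∑ c ∈ insert x B, (if b < c ∧ w c < w b then 1 else 0)
      = (if b < x ∧ w x < w b then 1 else 0) + ∑ c ∈ B, (if b < c ∧ w c < w b then 1 else 0) := by
    intro b _
    rw [Finset.sum_insert hx]
  rw [h1, Finset.sum_congr rfl h2, Finset.sum_add_distrib, ← hsum]
  have h3 : ∑ b ∈ B, (if b < x ∧ w x < w b then 1 else 0)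
      = (B.filter fun b => b < x ∧ w x < w b).card := by
    rw [Finset.card_eq_sum_ones, Finset.sum_filter]
  rw [h3]
  ring

lemma pset_one (n j : ℕ) :
    pset n (1 : Equiv.Perm (Fin n)) j = Finset.univ.filter fun b : Fin n => (b : ℕ) < j := by
  simp [pset]

lemma pset_perm (n : ℕ) (w : Equiv.Perm (Fin n)) (j : ℕ) :
    pset n w j = (Finset.univ.filter fun b : Fin n => (b : ℕ) < j).image w := rfl

lemma pset_inv (n : ℕ) (u : Equiv.Perm (Fin n)) (m : ℕ) :
    pset n u⁻¹ m = Finset.univ.filter fun b : Fin n => ((u b : ℕ)) < m := by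
  ext b
  simp only [pset, Finset.mem_image, Finset.mem_filter, Finset.mem_univ, true_and]
  constructor
  · rintro ⟨k, hk, rfl⟩
    simpa using hk
  · intro hb
    exact ⟨u b, hb, by simp⟩

lemma pset_rev (n : ℕ) (u : Equiv.Perm (Fin n)) (m : ℕ) :
    pset n (Fin.revPerm : Equiv.Perm (Fin n)) m
      = (Finset.univ.filter fun b : Fin n => ((u b : ℕ)) < m).image
          ((Fin.revPerm : Equiv.Perm (Fin n)) * u) := by
  ext y
  simp only [pset, Finset.mem_image, Finset.mem_filter, Finset.mem_univ, true_and]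
  constructor
  · rintro ⟨k, hk, rfl⟩
    exact ⟨u⁻¹ k, by simpa using hk, by simp [Equiv.Perm.mul_apply]⟩
  · rintro ⟨b, hb, rfl⟩
    exact ⟨u b, hb, by simp [Equiv.Perm.mul_apply]⟩

lemma w0u_lt_iff (n : ℕ) (u : Equiv.Perm (Fin n)) (x y : Fin n) :
    ((Fin.revPerm : Equiv.Perm (Fin n)) * u) x < ((Fin.revPerm : Equiv.Perm (Fin n)) * u) y
      ↔ u y < u x := by
  simp [Equiv.Perm.mul_apply, Fin.rev_lt_rev]

/-- The state matrix as a signed permutation matrix. -/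
lemma Z_eq (n : ℕ) (h : Fin n → ℂ) (u : Equiv.Perm (Fin n)) (l : List ℕ)
    (s : Fin n → ℂ)
    (hmat : wordMat n l = sgnmat n ((Fin.revPerm : Equiv.Perm (Fin n)) * u) s) :
    Matrix.diagonal h * wordMat n l
      = sgnmat n ((Fin.revPerm : Equiv.Perm (Fin n)) * u)
          (fun j => h (((Fin.revPerm : Equiv.Perm (Fin n)) * u) j) * s j) := by
  rw [hmat]
  ext i j
  rw [Matrix.diagonal_mul]
  simp only [sgnmat, Matrix.of_apply]
  by_cases hij : i = ((Fin.revPerm : Equiv.Perm (Fin n)) * u) j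
  · rw [if_pos hij, if_pos hij, hij]
  · rw [if_neg hij, if_neg hij, mul_zero]



lemma univ_one (n : ℕ) (h : Fin n → ℂ) (u : Equiv.Perm (Fin n)) (l : List ℕ) (s : Fin n → ℂ)
    (hmat : wordMat n l = sgnmat n ((Fin.revPerm : Equiv.Perm (Fin n)) * u) s)
    (hdet : ∏ j, h j = 1) (hlets : ∀ i ∈ l, i + 1 < n) :
    (-1:ℂ) ^ invw n ((Fin.revPerm : Equiv.Perm (Fin n)) * u) Finset.univ
      * ∏ b, (h (((Fin.revPerm : Equiv.Perm (Fin n)) * u) b) * s b) = 1 := by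
  have h1 : ((-1:ℂ)) ^ invw n ((Fin.revPerm : Equiv.Perm (Fin n)) * u) Finset.univ
      = ((Equiv.Perm.sign ((Fin.revPerm : Equiv.Perm (Fin n)) * u) : ℤ) : ℂ) := by
    rw [sign_eq_pinv, ← invw_univ_eq_pinv]
    push_cast
    ring
  rw [h1, ← det_sgnmat n ((Fin.revPerm : Equiv.Perm (Fin n)) * u)
      (fun b => h (((Fin.revPerm : Equiv.Perm (Fin n)) * u) b) * s b),
    ← Z_eq n h u l s hmat, Matrix.det_mul, Matrix.det_diagonal, hdet,
    det_wordMat n l hlets]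
  ring

lemma Rform (n : ℕ) (h : Fin n → ℂ) (u : Equiv.Perm (Fin n)) (l : List ℕ) (s : Fin n → ℂ)
    (hmat : wordMat n l = sgnmat n ((Fin.revPerm : Equiv.Perm (Fin n)) * u) s)
    (hdet : ∏ j, h j = 1) (hlets : ∀ i ∈ l, i + 1 < n) (j : ℕ) (hj : j ≤ n) :
    Rminor n h u l j
      = (-1:ℂ) ^ invw n ((Fin.revPerm : Equiv.Perm (Fin n)) * u)
          (Finset.univ.filter fun b : Fin n => (b : ℕ) < j)
        * ∏ b ∈ (Finset.univ.filter fun b : Fin n => (b : ℕ) < j),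
            h (((Fin.revPerm : Equiv.Perm (Fin n)) * u) b) * s b := by
  rcases eq_or_lt_of_le hj with heq | hjn
  · rw [Rminor, if_pos heq]
    have hu : (Finset.univ.filter fun b : Fin n => (b : ℕ) < j) = Finset.univ := by
      apply Finset.filter_true_of_mem
      intro b _
      rw [heq]
      exact b.isLt
    rw [hu]
    exact (univ_one n h u l s hmat hdet hlets).symm
  · rw [Rminor, if_neg (Nat.ne_of_lt hjn), Z_eq n h u l s hmat, pset_perm, pset_one]
    exact minorD_sgnmat _ _ _

lemma Bform (n : ℕ) (h : Fin n → ℂ) (u : Equiv.Perm (Fin n)) (l : List ℕ) (s : Fin n → ℂ)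
    (hmat : wordMat n l = sgnmat n ((Fin.revPerm : Equiv.Perm (Fin n)) * u) s)
    (hdet : ∏ j, h j = 1) (hlets : ∀ i ∈ l, i + 1 < n) (m : ℕ) (hm : m ≤ n) :
    Bminor n h u l m
      = (-1:ℂ) ^ invw n ((Fin.revPerm : Equiv.Perm (Fin n)) * u)
          (Finset.univ.filter fun b : Fin n => ((u b : ℕ)) < m)
        * ∏ b ∈ (Finset.univ.filter fun b : Fin n => ((u b : ℕ)) < m),
            h (((Fin.revPerm : Equiv.Perm (Fin n)) * u) b) * s b := by
  rcases eq_or_lt_of_le hm with heq | hmn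
  · rw [Bminor, if_pos heq]
    have hu : (Finset.univ.filter fun b : Fin n => ((u b : ℕ)) < m) = Finset.univ := by
      apply Finset.filter_true_of_mem
      intro b _
      rw [heq]
      exact (u b).isLt
    rw [hu]
    exact (univ_one n h u l s hmat hdet hlets).symm
  · rw [Bminor, if_neg (Nat.ne_of_lt hmn), Z_eq n h u l s hmat, pset_rev n u m, pset_inv n u m]
    exact minorD_sgnmat _ _ _


/-- relation between red and blue grid minors of a monomial
matrix. Here `a : Fin n` is the 0-based version of the 1-indexed `a`, so that
`R_a = Rminor (a+1)`, `R_{a−1} = Rminor a`, and `u(a)` (1-indexed) is `u a + 1`. -/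
theorem stmt10 (n : ℕ) (h : Fin n → ℂ) (hdet : ∏ j, h j = 1)
    (u : Equiv.Perm (Fin n)) (l : List ℕ)
    (hl : IsReducedWord n l ((Fin.revPerm : Equiv.Perm (Fin n)) * u)) (a : Fin n) :
    Rminor n h u l ((a : ℕ) + 1) * Bminor n h u l (u a : ℕ) =
      Bminor n h u l ((u a : ℕ) + 1) * Rminor n h u l (a : ℕ) := by
  obtain ⟨⟨hlets, hperm⟩, -⟩ := hl
  obtain ⟨s, hsgn, hmat⟩ := wordMat_eq n l hlets
  rw [hperm] at hmat
  have ha1 : (a : ℕ) + 1 ≤ n := a.isLt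
  have hua1 : (u a : ℕ) + 1 ≤ n := (u a).isLt
  rw [Rform n h u l s hmat hdet hlets ((a : ℕ) + 1) ha1,
    Rform n h u l s hmat hdet hlets (a : ℕ) (le_of_lt a.isLt),
    Bform n h u l s hmat hdet hlets ((u a : ℕ) + 1) hua1,
    Bform n h u l s hmat hdet hlets (u a : ℕ) (le_of_lt (u a).isLt)]
  set w : Equiv.Perm (Fin n) := (Fin.revPerm : Equiv.Perm (Fin n)) * u with hwdef
  set Ca := Finset.univ.filter (fun b : Fin n => (b : ℕ) < (a : ℕ)) with hCa
  set Da := Finset.univ.filter (fun b : Fin n => ((u b : ℕ)) < ((u a : ℕ))) with hDa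
  have haC : a ∉ Ca := by simp [hCa]
  have haD : a ∉ Da := by simp [hDa]
  have hCins : (Finset.univ.filter fun b : Fin n => (b : ℕ) < (a : ℕ) + 1) = insert a Ca := by
    ext b
    simp only [hCa, Finset.mem_filter, Finset.mem_univ, true_and, Finset.mem_insert, Fin.ext_iff]
    omega
  have hDins : (Finset.univ.filter fun b : Fin n => ((u b : ℕ)) < ((u a : ℕ)) + 1)
      = insert a Da := by
    ext b
    simp only [hDa, Finset.mem_filter, Finset.mem_univ, true_and, Finset.mem_insert]
    constructor
    · intro hb
      rcases Nat.lt_succ_iff_lt_or_eq.mp hb with h' | h'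
      · exact Or.inr h'
      · exact Or.inl (u.injective (Fin.ext h'))
    · rintro (rfl | h')
      · omega
      · omega
  set N := (Finset.univ.filter fun b : Fin n => b < a ∧ u b < u a).card with hN
  have hwlt : ∀ x y : Fin n, w x < w y ↔ u y < u x := w0u_lt_iff n u
  have hCinv : invw n w (insert a Ca) = invw n w Ca + N := by
    rw [invw_insert n w Ca a haC]
    have e1 : Ca.filter (fun b => a < b ∧ w b < w a) = ∅ := by
      apply Finset.filter_false_of_mem
      intro b hb
      simp only [hCa, Finset.mem_filter, Finset.mem_univ, true_and] at hb
      rintro ⟨h1, -⟩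
      have := Fin.lt_def.mp h1
      omega
    have e2 : Ca.filter (fun b => b < a ∧ w a < w b)
        = Finset.univ.filter fun b : Fin n => b < a ∧ u b < u a := by
      rw [hCa, Finset.filter_filter]
      apply Finset.filter_congr
      intro b _
      constructor
      · rintro ⟨-, hb2, hb3⟩
        exact ⟨hb2, (hwlt a b).mp hb3⟩
      · rintro ⟨hb1, hb2⟩
        exact ⟨Fin.lt_def.mp hb1, hb1, (hwlt a b).mpr hb2⟩
    rw [e1, e2]
    simp [hN]
  have hDinv : invw n w (insert a Da) = invw n w Da + N := by
    rw [invw_insert n w Da a haD]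
    have e1 : Da.filter (fun b => a < b ∧ w b < w a) = ∅ := by
      apply Finset.filter_false_of_mem
      intro b hb
      simp only [hDa, Finset.mem_filter, Finset.mem_univ, true_and] at hb
      rintro ⟨-, h2⟩
      have := (hwlt b a).mp h2
      have := Fin.lt_def.mp this
      omega
    have e2 : Da.filter (fun b => b < a ∧ w a < w b)
        = Finset.univ.filter fun b : Fin n => b < a ∧ u b < u a := by
      rw [hDa, Finset.filter_filter]
      apply Finset.filter_congr
      intro b _
      constructor
      · rintro ⟨-, hb2, hb3⟩
        exact ⟨hb2, (hwlt a b).mp hb3⟩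
      · rintro ⟨hb1, hb2⟩
        exact ⟨Fin.lt_def.mp hb2, hb1, (hwlt a b).mpr hb2⟩
    rw [e1, e2]
    simp [hN]
  rw [hCins, hDins, hCinv, hDinv, Finset.prod_insert haC, Finset.prod_insert haD, pow_add,
    pow_add]
  ring
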